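/- Let F be a harmonic function on a simply connected open set U ⊆ ℝ² and p ∈ U. Then there exist a simply connected open neighborhood V ⊆ U of p and a harmonic function G : V → ℝ with nonvanishing gradient such that F = G + log(‖∇G‖) on V. -/

import Mathlib

open Real

/-- Partial derivative in the first coordinate. -/
noncomputable def pdx (F : ℝ × ℝ → ℝ) (p : ℝ × ℝ) : ℝ := fderiv ℝ F p (1, 0)

/-- Partial derivative in the second coordinate. -/
noncomputable def pdy (F : ℝ × ℝ → ℝ) (p : ℝ × ℝ) : ℝ := fderiv ℝ F p (0, 1)

/-- `F` is harmonic on `U`: it is `C²` there and its Laplacian vanishes. -/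
def HarmonicOn2 (F : ℝ × ℝ → ℝ) (U : Set (ℝ × ℝ)) : Prop :=
  ContDiffOn ℝ 2 F U ∧ ∀ p ∈ U, pdx (pdx F) p + pdy (pdy F) p = 0


open Complex Metric


open Complex Metric

/-- A function complex-differentiable on a closed ball has a primitive on the open ball. -/
lemma exists_primitive {h : ℂ → ℂ} {c : ℂ} {r : NNReal} (hr : 0 < r)
    (hd : DifferentiableOn ℂ h (closedBall c r)) :
    ∃ H : ℂ → ℂ, ∀ z ∈ ball c (r : ℝ), HasDerivAt H (h z) z := by
  have hp := hd.hasFPowerSeriesOnBall hr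
  set p := cauchyPowerSeries h c r with hpdef
  have hrad : (r : ENNReal) ≤ p.radius := hp.r_le
  refine ⟨fun z => ∑' n, (p.coeff n / (n + 1)) * (z - c) ^ (n + 1), ?_⟩
  intro z hz
  simp only [mem_ball] at hz
  obtain ⟨r', hr1', hr2'⟩ := exists_between hz
  have hr'0 : 0 ≤ r' := le_trans dist_nonneg hr1'.le
  set r'' : NNReal := ⟨r', hr'0⟩ with hr''def
  have hsum : Summable fun n => ‖p.coeff n‖ * r' ^ n := by
    have : (r'' : ENNReal) < p.radius := lt_of_lt_of_le (by exact_mod_cast hr2') hrad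
    exact (by simpa [FormalMultilinearSeries.norm_apply_eq_norm_coef] using p.summable_norm_mul_pow this :
      Summable fun n => ‖p.coeff n‖ * (r'' : ℝ) ^ n)
  have key : HasDerivAt (fun z => ∑' n, (p.coeff n / (n + 1)) * (z - c) ^ (n + 1))
      (∑' n, p.coeff n * (z - c) ^ n) z := by
    apply hasDerivAt_tsum_of_isPreconnected (g' := fun n y => p.coeff n * (y - c) ^ n)
      hsum isOpen_ball (convex_ball c r').isPreconnected
      (t := ball c r') ?_ ?_ (y₀ := c) (by simpa [mem_ball] using lt_of_le_of_lt dist_nonneg hr1') ?_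
      (by simpa [mem_ball] using hr1')
    · intro n y _
      have h1 : HasDerivAt (fun y : ℂ => (y - c) ^ (n + 1))
          ((n + 1 : ℕ) * (y - c) ^ n * 1) y := ((hasDerivAt_id y).sub_const c).pow (n + 1)
      have h2 := h1.const_mul (p.coeff n / (n + 1))
      convert h2 using 1
      have hne : ((n : ℂ) + 1) ≠ 0 := Nat.cast_add_one_ne_zero n
      · rfl
      push_cast
      field_simp
    · intro n y hy
      simp only [mem_ball] at hy
      rw [norm_mul, norm_pow]
      have hle : ‖y - c‖ ≤ r' := by simpa [dist_eq_norm] using hy.le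
      exact mul_le_mul_of_nonneg_left (pow_le_pow_left₀ (norm_nonneg _) hle n) (norm_nonneg _)
    · apply Summable.congr summable_zero
      intro n; simp
  have hsum2 : HasSum (fun n => p.coeff n * (z - c) ^ n) (h z) := by
    have hmem : z - c ∈ Metric.eball (0 : ℂ) r := by
      simp only [EMetric.mem_ball, edist_eq_enorm_sub, sub_zero, enorm_eq_nnnorm]
      exact_mod_cast (by simpa [dist_eq_norm] using hz : ‖z - c‖ < (r : ℝ))
    have := hp.hasSum hmem
    simp only [FormalMultilinearSeries.apply_eq_pow_smul_coeff, smul_eq_mul] at this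
    convert this using 2 with n
    · rfl
    · ring
    · rw [add_sub_cancel]
  rw [hsum2.tsum_eq] at key
  exact key



open Complex Metric

noncomputable def ee : ℂ ≃L[ℝ] ℝ × ℝ := Complex.equivRealProdCLM

lemma ee_apply (z : ℂ) : ee z = (z.re, z.im) := rfl

lemma ee_symm_apply (q : ℝ × ℝ) : ee.symm q = q.1 + q.2 * I :=
  Complex.equivRealProdCLM_symm_apply q

lemma ee_symm_e1 : ee.symm (1, 0) = 1 := by rw [ee_symm_apply]; simp

lemma ee_symm_e2 : ee.symm (0, 1) = I := by rw [ee_symm_apply]; simp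

/-- Extensionality for `ℝ`-linear maps on `ℝ × ℝ` with values in `ℝ`. -/
lemma clm_apply_decomp (T : ℝ × ℝ →L[ℝ] ℝ) (v : ℝ × ℝ) :
    T v = v.1 * T (1, 0) + v.2 * T (0, 1) := by
  have : v = v.1 • ((1:ℝ), (0:ℝ)) + v.2 • ((0:ℝ), (1:ℝ)) := by
    simp [Prod.ext_iff]
  rw [this, map_add, map_smul, map_smul]
  simp [smul_eq_mul]

/-- Extensionality for `ℝ`-linear maps on `ℂ`. -/
lemma clm_ext_complex {E : Type*} [NormedAddCommGroup E] [NormedSpace ℝ E]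
    {S T : ℂ →L[ℝ] E} (h1 : S 1 = T 1) (hI : S I = T I) : S = T := by
  ext v
  have hv : v = (v.re : ℝ) • (1 : ℂ) + (v.im : ℝ) • I := by
    simp [Complex.ext_iff]
  rw [hv, map_add, map_add, map_smul, map_smul, map_smul, map_smul, h1, hI]

/-- The `ℝ`-linear derivative of `q ↦ (u (ee.symm q)).re` at `ee z`. -/
noncomputable def reD (D : ℂ) : ℝ × ℝ →L[ℝ] ℝ :=
  Complex.reCLM.comp ((((ContinuousLinearMap.id ℂ ℂ).smulRight D).restrictScalars ℝ).comp
    (ee.symm : ℝ × ℝ →L[ℝ] ℂ))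

lemma reD_apply (D : ℂ) (v : ℝ × ℝ) : reD D v = (ee.symm v * D).re := by
  simp [reD, ContinuousLinearMap.smulRight_apply, smul_eq_mul]

lemma hasFDerivAt_reComp {u : ℂ → ℂ} {z D : ℂ} (h : HasDerivAt u D z) :
    HasFDerivAt (fun q : ℝ × ℝ => (u (ee.symm q)).re) (reD D) (ee z) := by
  have h1 : HasFDerivAt (fun q : ℝ × ℝ => u (ee.symm q))
      ((((ContinuousLinearMap.id ℂ ℂ).smulRight D).restrictScalars ℝ).comp
        (ee.symm : ℝ × ℝ →L[ℝ] ℂ)) (ee z) := by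
    have hu : HasFDerivAt u (((ContinuousLinearMap.id ℂ ℂ).smulRight D).restrictScalars ℝ)
        (ee.symm (ee z)) := by
      rw [ContinuousLinearEquiv.symm_apply_apply]
      exact h.hasFDerivAt.restrictScalars ℝ
    exact hu.comp (ee z) (ee.symm.hasFDerivAt)
  exact (Complex.reCLM.hasFDerivAt).comp (ee z) h1

lemma pdx_reComp {u : ℂ → ℂ} {z D : ℂ} (h : HasDerivAt u D z) :
    pdx (fun q : ℝ × ℝ => (u (ee.symm q)).re) (ee z) = D.re := by
  rw [pdx, (hasFDerivAt_reComp h).fderiv, reD_apply, ee_symm_e1, one_mul]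

lemma pdy_reComp {u : ℂ → ℂ} {z D : ℂ} (h : HasDerivAt u D z) :
    pdy (fun q : ℝ × ℝ => (u (ee.symm q)).re) (ee z) = -D.im := by
  rw [pdy, (hasFDerivAt_reComp h).fderiv, reD_apply, ee_symm_e2]
  simp

lemma ee_one : ee 1 = ((1:ℝ), (0:ℝ)) := by rw [ee_apply]; simp
lemma ee_I : ee I = ((0:ℝ), (1:ℝ)) := by rw [ee_apply]; simp

/-- Schwarz symmetry of second partial derivatives for a `C²` function on an open set. -/
lemma schwarz_pd {F : ℝ × ℝ → ℝ} {U : Set (ℝ × ℝ)} (hU : IsOpen U)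
    (hF : ContDiffOn ℝ 2 F U) {q : ℝ × ℝ} (hq : q ∈ U) :
    pdy (pdx F) q = pdx (pdy F) q := by
  have hev : ∀ᶠ y in nhds q, HasFDerivAt F (fderiv ℝ F y) y := by
    filter_upwards [hU.mem_nhds hq] with y hy
    exact ((hF.contDiffAt (hU.mem_nhds hy)).differentiableAt (by norm_num)).hasFDerivAt
  have hfd : ContDiffAt ℝ 1 (fderiv ℝ F) q :=
    (hF.contDiffAt (hU.mem_nhds hq)).fderiv_right (by norm_num)
  have hD2 : HasFDerivAt (fderiv ℝ F) (fderiv ℝ (fderiv ℝ F) q) q :=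
    (hfd.differentiableAt (by norm_num)).hasFDerivAt
  have hsymm := second_derivative_symmetric_of_eventually hev hD2
  have hx : HasFDerivAt (fun y => fderiv ℝ F y (1, 0))
      ((ContinuousLinearMap.apply ℝ ℝ ((1:ℝ), (0:ℝ))).comp (fderiv ℝ (fderiv ℝ F) q)) q :=
    (ContinuousLinearMap.apply ℝ ℝ ((1:ℝ), (0:ℝ))).hasFDerivAt.comp q hD2
  have hy : HasFDerivAt (fun y => fderiv ℝ F y (0, 1))
      ((ContinuousLinearMap.apply ℝ ℝ ((0:ℝ), (1:ℝ))).comp (fderiv ℝ (fderiv ℝ F) q)) q :=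
    (ContinuousLinearMap.apply ℝ ℝ ((0:ℝ), (1:ℝ))).hasFDerivAt.comp q hD2
  have e1 : pdy (pdx F) q = fderiv ℝ (fderiv ℝ F) q (0, 1) (1, 0) := by
    have e0 : pdy (pdx F) q = fderiv ℝ (fun y => fderiv ℝ F y (1, 0)) q (0, 1) := rfl
    rw [e0, hx.fderiv]; rfl
  have e2 : pdx (pdy F) q = fderiv ℝ (fderiv ℝ F) q (1, 0) (0, 1) := by
    have e0 : pdx (pdy F) q = fderiv ℝ (fun y => fderiv ℝ F y (0, 1)) q (1, 0) := rfl
    rw [e0, hy.fderiv]; rfl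
  rw [e1, e2, hsymm]

/-- Differentiability of the apply-composed partial derivatives. -/
lemma pdx_differentiableAt {F : ℝ × ℝ → ℝ} {U : Set (ℝ × ℝ)} (hU : IsOpen U)
    (hF : ContDiffOn ℝ 2 F U) {q : ℝ × ℝ} (hq : q ∈ U) :
    DifferentiableAt ℝ (pdx F) q := by
  have hfd : ContDiffAt ℝ 1 (fderiv ℝ F) q :=
    (hF.contDiffAt (hU.mem_nhds hq)).fderiv_right (by norm_num)
  exact ((ContinuousLinearMap.apply ℝ ℝ ((1:ℝ), (0:ℝ))).differentiable.differentiableAt).comp q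
    (hfd.differentiableAt (by norm_num))

lemma pdy_differentiableAt {F : ℝ × ℝ → ℝ} {U : Set (ℝ × ℝ)} (hU : IsOpen U)
    (hF : ContDiffOn ℝ 2 F U) {q : ℝ × ℝ} (hq : q ∈ U) :
    DifferentiableAt ℝ (pdy F) q := by
  have hfd : ContDiffAt ℝ 1 (fderiv ℝ F) q :=
    (hF.contDiffAt (hU.mem_nhds hq)).fderiv_right (by norm_num)
  exact ((ContinuousLinearMap.apply ℝ ℝ ((0:ℝ), (1:ℝ))).differentiable.differentiableAt).comp q
    (hfd.differentiableAt (by norm_num))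

/-- `Fx - Fy·I` is complex differentiable where `F` is harmonic. -/
lemma holoW {F : ℝ × ℝ → ℝ} {U : Set (ℝ × ℝ)} (hU : IsOpen U)
    (hF : ContDiffOn ℝ 2 F U)
    (hlap : ∀ q ∈ U, pdx (pdx F) q + pdy (pdy F) q = 0) {z : ℂ} (hz : ee z ∈ U) :
    DifferentiableAt ℂ (fun w => (pdx F (ee w) : ℂ) - (pdy F (ee w)) * I) z := by
  have hxd := (pdx_differentiableAt hU hF hz).hasFDerivAt
  have hyd := (pdy_differentiableAt hU hF hz).hasFDerivAt
  set Dx := fderiv ℝ (pdx F) (ee z) with hDx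
  set Dy := fderiv ℝ (pdy F) (ee z) with hDy
  have h1 : HasFDerivAt (fun w : ℂ => pdx F (ee w)) (Dx.comp (ee : ℂ →L[ℝ] ℝ × ℝ)) z :=
    hxd.comp z ee.hasFDerivAt
  have h2 : HasFDerivAt (fun w : ℂ => ((pdx F (ee w) : ℝ) : ℂ))
      (Complex.ofRealCLM.comp (Dx.comp (ee : ℂ →L[ℝ] ℝ × ℝ))) z :=
    Complex.ofRealCLM.hasFDerivAt.comp z h1
  have h3 : HasFDerivAt (fun w : ℂ => pdy F (ee w)) (Dy.comp (ee : ℂ →L[ℝ] ℝ × ℝ)) z :=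
    hyd.comp z ee.hasFDerivAt
  have h4 : HasFDerivAt (fun w : ℂ => ((pdy F (ee w) : ℝ) : ℂ))
      (Complex.ofRealCLM.comp (Dy.comp (ee : ℂ →L[ℝ] ℝ × ℝ))) z :=
    Complex.ofRealCLM.hasFDerivAt.comp z h3
  have h5 := h2.sub (h4.mul_const I)
  set c : ℂ := (pdx (pdx F) (ee z) : ℂ) - (pdx (pdy F) (ee z)) * I with hc
  have hsym := schwarz_pd hU hF hz
  have hlap0 := hlap (ee z) hz
  refine (hasFDerivAt_of_restrictScalars ℝ h5 ?_ (f' := (1 : ℂ →L[ℂ] ℂ).smulRight c)).differentiableAt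
  apply clm_ext_complex
  · have ex : Dx ((1:ℝ), (0:ℝ)) = pdx (pdx F) (ee z) := rfl
    have ey : Dy ((1:ℝ), (0:ℝ)) = pdx (pdy F) (ee z) := rfl
    simp only [ContinuousLinearMap.coe_restrictScalars', ContinuousLinearMap.smulRight_apply,
      ContinuousLinearMap.one_apply, ContinuousLinearMap.sub_apply,
      ContinuousLinearMap.smul_apply, ContinuousLinearMap.coe_comp', Function.comp_apply,
      ContinuousLinearEquiv.coe_coe, smul_eq_mul, one_smul, ee_one, ex, ey, hc]
    simp [Complex.ext_iff]
  · have ex : Dx ((0:ℝ), (1:ℝ)) = pdy (pdx F) (ee z) := rfl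
    have ey : Dy ((0:ℝ), (1:ℝ)) = pdy (pdy F) (ee z) := rfl
    have h9 : pdy (pdy F) (ee z) = -pdx (pdx F) (ee z) := by linarith
    simp only [ContinuousLinearMap.coe_restrictScalars', ContinuousLinearMap.smulRight_apply,
      ContinuousLinearMap.one_apply, ContinuousLinearMap.sub_apply,
      ContinuousLinearMap.smul_apply, ContinuousLinearMap.coe_comp', Function.comp_apply,
      ContinuousLinearEquiv.coe_coe, smul_eq_mul, one_smul, ee_I, ex, ey, h9, hsym, hc]
    simp [Complex.ext_iff]


/-- Lemma 1: a harmonic `F` on a simply connected open `U` can locally be written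
as `G + log ‖∇G‖` with `G` harmonic and `∇G` nonvanishing. -/
theorem minding_lemma_real
    (U : Set (ℝ × ℝ)) (hU : IsOpen U) (hsc : SimplyConnectedSpace U)
    (F : ℝ × ℝ → ℝ) (hF : HarmonicOn2 F U) (p : ℝ × ℝ) (hp : p ∈ U) :
    ∃ (V : Set (ℝ × ℝ)) (G : ℝ × ℝ → ℝ),
      IsOpen V ∧ SimplyConnectedSpace V ∧ p ∈ V ∧ V ⊆ U ∧
      HarmonicOn2 G V ∧
      (∀ q ∈ V, (pdx G q, pdy G q) ≠ (0, 0)) ∧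
      (∀ q ∈ V, F q = G q + Real.log (Real.sqrt ((pdx G q) ^ 2 + (pdy G q) ^ 2))) := by
  obtain ⟨hF2, hlap⟩ := hF
  set z₀ : ℂ := ee.symm p with hz₀def
  have hez₀ : ee z₀ = p := ee.apply_symm_apply p
  have hUc : IsOpen ((ee : ℂ → ℝ × ℝ) ⁻¹' U) := hU.preimage ee.continuous
  have hz₀U : z₀ ∈ (ee : ℂ → ℝ × ℝ) ⁻¹' U := by
    simp only [Set.mem_preimage, hez₀]; exact hp
  obtain ⟨ε, hε0, hεsub⟩ := Metric.isOpen_iff.mp hUc z₀ hz₀U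
  set r₁ : NNReal := ⟨ε / 2, by positivity⟩ with hr₁def
  have hr₁0 : 0 < r₁ := by
    rw [← NNReal.coe_lt_coe]; show (0:ℝ) < ε/2; positivity
  have hr₁ε : (r₁ : ℝ) < ε := by show ε/2 < ε; linarith
  have hcb₁ : closedBall z₀ (r₁ : ℝ) ⊆ (ee : ℂ → ℝ × ℝ) ⁻¹' U :=
    (closedBall_subset_ball hr₁ε).trans hεsub
  set W : ℂ → ℂ := fun w => (pdx F (ee w) : ℂ) - (pdy F (ee w)) * I with hWdef
  have hWd : DifferentiableOn ℂ W (closedBall z₀ (r₁ : ℝ)) := fun w hw =>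
    (holoW hU hF2 hlap (hcb₁ hw)).differentiableWithinAt
  obtain ⟨f₀, hf₀⟩ := exists_primitive hr₁0 hWd
  set f : ℂ → ℂ := fun w => f₀ w + ((F p - (f₀ z₀).re : ℝ) : ℂ) with hfdef
  have hfd : ∀ w ∈ ball z₀ (r₁ : ℝ), HasDerivAt f (W w) w := fun w hw =>
    (hf₀ w hw).add_const _
  have hz₀b₁ : z₀ ∈ ball z₀ (r₁ : ℝ) := mem_ball_self (by exact_mod_cast hr₁0)
  have hfz₀ : (f z₀).re = F p := by simp [hfdef]
  -- Re f = F ∘ ee on ball r₁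
  have hReF : ∀ w ∈ ball z₀ (r₁ : ℝ), (f w).re = F (ee w) := by
    have hφ : ∀ w ∈ ball z₀ (r₁ : ℝ),
        HasFDerivAt (fun v => (f v).re - F (ee v)) (0 : ℂ →L[ℝ] ℝ) w := by
      intro w hw
      have hFq : DifferentiableAt ℝ F (ee w) :=
        (hF2.contDiffAt (hU.mem_nhds (hcb₁ (ball_subset_closedBall hw)))).differentiableAt
          (by norm_num)
      have h1 : HasFDerivAt (fun v => (f v).re)
          (Complex.reCLM.comp
            (((ContinuousLinearMap.id ℂ ℂ).smulRight (W w)).restrictScalars ℝ)) w :=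
        Complex.reCLM.hasFDerivAt.comp w ((hfd w hw).hasFDerivAt.restrictScalars ℝ)
      have h2 : HasFDerivAt (fun v => F (ee v))
          ((fderiv ℝ F (ee w)).comp (ee : ℂ →L[ℝ] ℝ × ℝ)) w :=
        hFq.hasFDerivAt.comp w ee.hasFDerivAt
      have h3 := h1.sub h2
      have hzero : (Complex.reCLM.comp
            (((ContinuousLinearMap.id ℂ ℂ).smulRight (W w)).restrictScalars ℝ)) -
          ((fderiv ℝ F (ee w)).comp (ee : ℂ →L[ℝ] ℝ × ℝ)) = 0 := by
        apply clm_ext_complex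
        · simp only [ContinuousLinearMap.sub_apply, ContinuousLinearMap.coe_comp',
            Function.comp_apply, ContinuousLinearMap.coe_restrictScalars',
            ContinuousLinearMap.smulRight_apply, ContinuousLinearMap.id_apply,
            ContinuousLinearEquiv.coe_coe, one_smul, ContinuousLinearMap.zero_apply, ee_one]
          have e2 : fderiv ℝ F (ee w) ((1:ℝ), (0:ℝ)) = pdx F (ee w) := rfl
          rw [e2, hWdef]
          simp
        · simp only [ContinuousLinearMap.sub_apply, ContinuousLinearMap.coe_comp',
            Function.comp_apply, ContinuousLinearMap.coe_restrictScalars',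
            ContinuousLinearMap.smulRight_apply, ContinuousLinearMap.id_apply,
            ContinuousLinearEquiv.coe_coe, ContinuousLinearMap.zero_apply, ee_I]
          have e2 : fderiv ℝ F (ee w) ((0:ℝ), (1:ℝ)) = pdy F (ee w) := rfl
          rw [e2, hWdef]
          simp [smul_eq_mul]
      rw [← hzero]
      exact h3
    intro w hw
    have hconst := (convex_ball z₀ (r₁:ℝ)).is_const_of_fderivWithin_eq_zero
      (f := fun v => (f v).re - F (ee v)) (𝕜 := ℝ)
      (fun v hv => ((hφ v hv).differentiableAt).differentiableWithinAt)
      (fun v hv => by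
        rw [fderivWithin_of_isOpen isOpen_ball hv, (hφ v hv).fderiv])
      hw hz₀b₁
    have : (f w).re - F (ee w) = (f z₀).re - F (ee z₀) := hconst
    rw [hfz₀, hez₀] at this
    linarith
  -- second primitive
  set r₂ : NNReal := r₁ / 2 with hr₂def
  have hr₂0 : 0 < r₂ := by positivity
  have hr₂r₁ : (r₂ : ℝ) < (r₁ : ℝ) := by
    rw [hr₂def]; push_cast
    have : (0:ℝ) < r₁ := by exact_mod_cast hr₁0
    linarith
  have hb₂b₁ : ball z₀ (r₂ : ℝ) ⊆ ball z₀ (r₁ : ℝ) := ball_subset_ball hr₂r₁.le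
  have hexp : DifferentiableOn ℂ (fun w => cexp (f w)) (closedBall z₀ (r₂ : ℝ)) := by
    intro w hw
    have hwb : w ∈ ball z₀ (r₁ : ℝ) := (closedBall_subset_ball hr₂r₁) hw
    exact ((hfd w hwb).differentiableAt.cexp).differentiableWithinAt
  obtain ⟨ψ, hψ⟩ := exists_primitive hr₂0 hexp
  set ψ₁ : ℂ → ℂ := fun w => ψ w - ψ z₀ + 1 with hψ₁def
  have hψ₁d : ∀ w ∈ ball z₀ (r₂ : ℝ), HasDerivAt ψ₁ (cexp (f w)) w := fun w hw =>
    ((hψ w hw).sub_const _).add_const 1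
  have hψ₁z₀ : ψ₁ z₀ = 1 := by simp [hψ₁def]
  have hz₀b₂ : z₀ ∈ ball z₀ (r₂ : ℝ) := mem_ball_self (by exact_mod_cast hr₂0)
  have hcont : ContinuousAt ψ₁ z₀ := (hψ₁d z₀ hz₀b₂).differentiableAt.continuousAt
  have hnhds : ψ₁ ⁻¹' Complex.slitPlane ∈ nhds z₀ :=
    hcont.preimage_mem_nhds (Complex.isOpen_slitPlane.mem_nhds (by
      rw [hψ₁z₀]; exact Complex.one_mem_slitPlane))
  obtain ⟨δ, hδ0, hδ⟩ := Metric.mem_nhds_iff.mp hnhds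
  set r₃ : ℝ := min δ ((r₂ : ℝ) / 2) with hr₃def
  have hr₃0 : 0 < r₃ := by
    apply lt_min hδ0
    have : (0:ℝ) < r₂ := by exact_mod_cast hr₂0
    linarith
  have hb₃b₂ : ball z₀ r₃ ⊆ ball z₀ (r₂ : ℝ) := by
    apply ball_subset_ball
    have : (0:ℝ) < r₂ := by exact_mod_cast hr₂0
    calc r₃ ≤ (r₂:ℝ)/2 := min_le_right _ _
      _ ≤ (r₂:ℝ) := by linarith
  have hb₃δ : ball z₀ r₃ ⊆ ball z₀ δ := ball_subset_ball (min_le_left _ _)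
  have hslit : ∀ w ∈ ball z₀ r₃, ψ₁ w ∈ Complex.slitPlane := fun w hw => hδ (hb₃δ hw)
  set g : ℂ → ℂ := fun w => Complex.log (ψ₁ w) with hgdef
  set gd : ℂ → ℂ := fun w => cexp (f w - g w) with hgddef
  have hgd_ne : ∀ w, gd w ≠ 0 := fun w => Complex.exp_ne_zero _
  have hg : ∀ w ∈ ball z₀ r₃, HasDerivAt g (gd w) w := by
    intro w hw
    have hs := hslit w hw
    have hne : ψ₁ w ≠ 0 := Complex.slitPlane_ne_zero hs
    have h := (hψ₁d w (hb₃b₂ hw)).clog hs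
    convert h using 1
    show cexp (f w - g w) = cexp (f w) / ψ₁ w
    rw [Complex.exp_sub]
    congr 1
    exact Complex.exp_log hne
  have hgd : ∀ w ∈ ball z₀ r₃, HasDerivAt gd (gd w * (W w - gd w)) w := by
    intro w hw
    exact ((hfd w (hb₂b₁ (hb₃b₂ hw))).sub (hg w hw)).cexp
  -- the set V and function G
  refine ⟨(ee.symm : ℝ × ℝ → ℂ) ⁻¹' (ball z₀ r₃), fun q => (g (ee.symm q)).re,
    ?_, ?_, ?_, ?_, ⟨?_, ?_⟩, ?_, ?_⟩
  case _ => exact isOpen_ball.preimage ee.symm.continuous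
  case _ =>
    have hconv : Convex ℝ ((ee.symm : ℝ × ℝ → ℂ) ⁻¹' (ball z₀ r₃)) := by
      intro x hx y hy a b ha hb hab
      simp only [Set.mem_preimage, map_add, map_smul] at *
      exact (convex_ball z₀ r₃) hx hy ha hb hab
    have hne : ((ee.symm : ℝ × ℝ → ℂ) ⁻¹' (ball z₀ r₃)).Nonempty :=
      ⟨p, by simp only [Set.mem_preimage, ← hz₀def]; exact mem_ball_self hr₃0⟩
    have := hconv.contractibleSpace hne
    infer_instance
  case _ => simp only [Set.mem_preimage, ← hz₀def]; exact mem_ball_self hr₃0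
  case _ =>
    intro q hq
    simp only [Set.mem_preimage] at hq
    have : ee (ee.symm q) ∈ U := hcb₁ (ball_subset_closedBall (hb₂b₁ (hb₃b₂ hq)))
    rwa [ee.apply_symm_apply] at this
  -- ContDiffOn
  case _ =>
    have hgdiff : DifferentiableOn ℂ g (ball z₀ r₃) := fun w hw =>
      (hg w hw).differentiableAt.differentiableWithinAt
    have hgc : ContDiffOn ℂ 2 g (ball z₀ r₃) := hgdiff.contDiffOn isOpen_ball
    have hgr : ContDiffOn ℝ 2 g (ball z₀ r₃) := hgc.restrict_scalars ℝ
    have h1 : ContDiffOn ℝ 2 (fun q : ℝ × ℝ => g (ee.symm q))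
        ((ee.symm : ℝ × ℝ → ℂ) ⁻¹' (ball z₀ r₃)) := by
      apply hgr.comp (ee.symm.contDiff.contDiffOn)
      intro q hq
      exact hq
    have := Complex.reCLM.contDiff.comp_contDiffOn h1
    exact this.congr (fun q _ => rfl)
  -- Laplacian
  case _ =>
    intro q hq
    simp only [Set.mem_preimage] at hq
    have hVopen : IsOpen ((ee.symm : ℝ × ℝ → ℂ) ⁻¹' (ball z₀ r₃)) :=
      isOpen_ball.preimage ee.symm.continuous
    have hpdx : ∀ q' ∈ (ee.symm : ℝ × ℝ → ℂ) ⁻¹' (ball z₀ r₃),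
        pdx (fun q => (g (ee.symm q)).re) q' = (gd (ee.symm q')).re := by
      intro q' hq'
      have h := pdx_reComp (hg _ hq')
      rwa [ee.apply_symm_apply] at h
    have hpdy : ∀ q' ∈ (ee.symm : ℝ × ℝ → ℂ) ⁻¹' (ball z₀ r₃),
        pdy (fun q => (g (ee.symm q)).re) q' = -(gd (ee.symm q')).im := by
      intro q' hq'
      have h := pdy_reComp (hg _ hq')
      rwa [ee.apply_symm_apply] at h
    have hmem : (ee.symm : ℝ × ℝ → ℂ) ⁻¹' (ball z₀ r₃) ∈ nhds q :=
      hVopen.mem_nhds (by simpa [Set.mem_preimage] using hq)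
    have hx_ev : pdx (fun q => (g (ee.symm q)).re) =ᶠ[nhds q]
        fun q' => (gd (ee.symm q')).re :=
      Filter.eventuallyEq_of_mem hmem hpdx
    have hy_ev : pdy (fun q => (g (ee.symm q)).re) =ᶠ[nhds q]
        fun q' => ((gd (ee.symm q')) * I).re := by
      apply Filter.eventuallyEq_of_mem hmem
      intro q' hq'
      rw [hpdy q' hq']
      simp
    have h1 : pdx (pdx (fun q => (g (ee.symm q)).re)) q
        = (gd (ee.symm q) * (W (ee.symm q) - gd (ee.symm q))).re := by
      have e0 : pdx (pdx (fun q => (g (ee.symm q)).re)) q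
          = fderiv ℝ (pdx (fun q => (g (ee.symm q)).re)) q (1, 0) := rfl
      rw [e0, hx_ev.fderiv_eq]
      have h := pdx_reComp (hgd _ hq)
      rwa [ee.apply_symm_apply] at h
    have h2 : pdy (pdy (fun q => (g (ee.symm q)).re)) q
        = -((gd (ee.symm q) * (W (ee.symm q) - gd (ee.symm q))) * I).im := by
      have e0 : pdy (pdy (fun q => (g (ee.symm q)).re)) q
          = fderiv ℝ (pdy (fun q => (g (ee.symm q)).re)) q (0, 1) := rfl
      rw [e0, hy_ev.fderiv_eq]
      have h := pdy_reComp ((hgd _ hq).mul_const I)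
      rwa [ee.apply_symm_apply] at h
    rw [h1, h2]
    simp
  -- gradient nonvanishing
  case _ =>
    intro q hq
    simp only [Set.mem_preimage] at hq
    have hpdxq : pdx (fun q => (g (ee.symm q)).re) q = (gd (ee.symm q)).re := by
      have h := pdx_reComp (hg _ hq); rwa [ee.apply_symm_apply] at h
    have hpdyq : pdy (fun q => (g (ee.symm q)).re) q = -(gd (ee.symm q)).im := by
      have h := pdy_reComp (hg _ hq); rwa [ee.apply_symm_apply] at h
    rw [hpdxq, hpdyq]
    intro hcontra
    rw [Prod.ext_iff] at hcontra
    apply hgd_ne (ee.symm q)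
    apply Complex.ext
    · exact hcontra.1
    · simpa using hcontra.2
  -- the identity
  case _ =>
    intro q hq
    simp only [Set.mem_preimage] at hq
    have hpdxq : pdx (fun q => (g (ee.symm q)).re) q = (gd (ee.symm q)).re := by
      have h := pdx_reComp (hg _ hq); rwa [ee.apply_symm_apply] at h
    have hpdyq : pdy (fun q => (g (ee.symm q)).re) q = -(gd (ee.symm q)).im := by
      have h := pdy_reComp (hg _ hq); rwa [ee.apply_symm_apply] at h
    rw [hpdxq, hpdyq]
    have h1 : Real.sqrt ((gd (ee.symm q)).re ^ 2 + (-(gd (ee.symm q)).im) ^ 2)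
        = ‖gd (ee.symm q)‖ := by
      rw [neg_sq]
      have h0 : (gd (ee.symm q)).re ^ 2 + (gd (ee.symm q)).im ^ 2
          = (‖gd (ee.symm q)‖) ^ 2 := by
        rw [Complex.sq_norm, Complex.normSq_apply]; ring
      rw [h0, Real.sqrt_sq (norm_nonneg _)]
    rw [h1]
    have h2 : Real.log (‖gd (ee.symm q)‖)
        = (f (ee.symm q)).re - (g (ee.symm q)).re := by
      show Real.log (‖cexp (f (ee.symm q) - g (ee.symm q))‖) = _
      rw [Complex.norm_exp, Real.log_exp, Complex.sub_re]
    rw [h2]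
    have h3 : F q = (f (ee.symm q)).re := by
      have := hReF (ee.symm q) (hb₂b₁ (hb₃b₂ hq))
      rw [ee.apply_symm_apply] at this
      exact this.symm
    rw [h3]
    ring
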